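/- Every subset of the set {εᵢ + εⱼ : 1 ≤ i < j ≤ 4} ⊂ ℚ⁴/ℚ(1,1,1,1) (equivalently, of {eᵢ + eⱼ : 1 ≤ i < j ≤ 4} where eᵢ = εᵢ − (1/4)(1,1,1,1)) is saturated. -/

import Mathlib

/-- The quasi-basis vectors `eᵢ = εᵢ − (1/n)∑ⱼ εⱼ` in `ℚⁿ`; they satisfy `∑ᵢ eᵢ = 0`. -/
def e (n : ℕ) (i : Fin n) : Fin n → ℚ :=
  fun j => (if j = i then 1 else 0) - 1 / n

/-- A finite set of vectors in `ℚⁿ` is *saturated* if every vector that is both an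
integer combination and a nonnegative-rational combination of its elements is a
nonnegative-integer combination of its elements. -/
def IsSaturatedSet {n : ℕ} (M : Finset (Fin n → ℚ)) : Prop :=
  ∀ x : Fin n → ℚ,
    (∃ c : (Fin n → ℚ) → ℤ, x = ∑ v ∈ M, (c v : ℚ) • v) →
    (∃ q : (Fin n → ℚ) → ℚ, (∀ v ∈ M, 0 ≤ q v) ∧ x = ∑ v ∈ M, q v • v) →
    ∃ m : (Fin n → ℚ) → ℕ, x = ∑ v ∈ M, (m v : ℚ) • v

private def va : Fin 4 → ℚ := ![1/2, 1/2, -1/2, -1/2]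
private def vb : Fin 4 → ℚ := ![1/2, -1/2, 1/2, -1/2]
private def vc : Fin 4 → ℚ := ![1/2, -1/2, -1/2, 1/2]

private lemma ne_of_apply4 {u v : Fin 4 → ℚ} (k : Fin 4) (h : u k ≠ v k) : u ≠ v :=
  fun he => h (congrFun he k)

private lemma n12 : va ≠ vb := ne_of_apply4 1 (by norm_num [va, vb])
private lemma n13 : va ≠ vc := ne_of_apply4 1 (by norm_num [va, vc])
private lemma n23 : vb ≠ vc := ne_of_apply4 2 (by norm_num [vb, vc, Matrix.cons_val_two, Matrix.tail_cons, Matrix.head_cons])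
private lemma n14 : va ≠ -va := ne_of_apply4 0 (by norm_num [va])
private lemma n15 : va ≠ -vb := ne_of_apply4 0 (by norm_num [va, vb])
private lemma n16 : va ≠ -vc := ne_of_apply4 0 (by norm_num [va, vc])
private lemma n24 : vb ≠ -va := ne_of_apply4 0 (by norm_num [va, vb])
private lemma n25 : vb ≠ -vb := ne_of_apply4 0 (by norm_num [vb])
private lemma n26 : vb ≠ -vc := ne_of_apply4 0 (by norm_num [vb, vc])
private lemma n34 : vc ≠ -va := ne_of_apply4 0 (by norm_num [va, vc])
private lemma n35 : vc ≠ -vb := ne_of_apply4 0 (by norm_num [vb, vc])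
private lemma n36 : vc ≠ -vc := ne_of_apply4 0 (by norm_num [vc])
private lemma n45 : -va ≠ -vb := fun h => n12 (neg_injective h)
private lemma n46 : -va ≠ -vc := fun h => n13 (neg_injective h)
private lemma n56 : -vb ≠ -vc := fun h => n23 (neg_injective h)

private lemma hexp {S : Finset (Fin 4 → ℚ)}
    (hsub : S ⊆ ({va, vb, vc, -va, -vb, -vc} : Finset (Fin 4 → ℚ)))
    (f : (Fin 4 → ℚ) → ℚ) :
    ∑ v ∈ S, f v • v =
      (if va ∈ S then f va else 0) • va + (if vb ∈ S then f vb else 0) • vb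
      + (if vc ∈ S then f vc else 0) • vc + (if -va ∈ S then f (-va) else 0) • (-va)
      + (if -vb ∈ S then f (-vb) else 0) • (-vb)
      + (if -vc ∈ S then f (-vc) else 0) • (-vc) := by
  have h1 : ∑ v ∈ S, f v • v = ∑ v ∈ S, (if v ∈ S then f v else 0) • v :=
    Finset.sum_congr rfl (fun v hv => by rw [if_pos hv])
  rw [h1, Finset.sum_subset hsub (fun v _ hv => by rw [if_neg hv, zero_smul])]
  rw [show ({va, vb, vc, -va, -vb, -vc} : Finset (Fin 4 → ℚ)) =
      insert va (insert vb (insert vc (insert (-va) (insert (-vb) {-vc})))) from rfl]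
  rw [Finset.sum_insert (by
      simp only [Finset.mem_insert, Finset.mem_singleton]; push_neg
      exact ⟨n12, n13, n14, n15, n16⟩),
    Finset.sum_insert (by
      simp only [Finset.mem_insert, Finset.mem_singleton]; push_neg
      exact ⟨n23, n24, n25, n26⟩),
    Finset.sum_insert (by
      simp only [Finset.mem_insert, Finset.mem_singleton]; push_neg
      exact ⟨n34, n35, n36⟩),
    Finset.sum_insert (by
      simp only [Finset.mem_insert, Finset.mem_singleton]; push_neg
      exact ⟨n45, n46⟩),
    Finset.sum_insert (by simpa using n56), Finset.sum_singleton]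
  ring

private lemma toNat_key (z : ℤ) : (z : ℚ) = ((z.toNat : ℕ) : ℚ) - (((-z).toNat : ℕ) : ℚ) := by
  have h : (z.toNat : ℤ) - ((-z).toNat : ℤ) = z := by omega
  calc (z : ℚ) = (((z.toNat : ℤ) - ((-z).toNat : ℤ) : ℤ) : ℚ) := by rw [h]
    _ = _ := by push_cast; ring

private lemma e01 : e 4 0 + e 4 1 = va := by
  funext k; fin_cases k <;>
    simp [e, va, Fin.ext_iff, show ((2:Fin 4):ℕ) = 2 from rfl,
      show ((3:Fin 4):ℕ) = 3 from rfl] <;> norm_num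
private lemma e02 : e 4 0 + e 4 2 = vb := by
  funext k; fin_cases k <;>
    simp [e, vb, Fin.ext_iff, show ((2:Fin 4):ℕ) = 2 from rfl,
      show ((3:Fin 4):ℕ) = 3 from rfl] <;> norm_num
private lemma e03 : e 4 0 + e 4 3 = vc := by
  funext k; fin_cases k <;>
    simp [e, vc, Fin.ext_iff, show ((2:Fin 4):ℕ) = 2 from rfl,
      show ((3:Fin 4):ℕ) = 3 from rfl] <;> norm_num
private lemma e12 : e 4 1 + e 4 2 = -vc := by
  funext k; fin_cases k <;>
    simp [e, vc, Fin.ext_iff, show ((2:Fin 4):ℕ) = 2 from rfl,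
      show ((3:Fin 4):ℕ) = 3 from rfl] <;> norm_num
private lemma e13 : e 4 1 + e 4 3 = -vb := by
  funext k; fin_cases k <;>
    simp [e, vb, Fin.ext_iff, show ((2:Fin 4):ℕ) = 2 from rfl,
      show ((3:Fin 4):ℕ) = 3 from rfl] <;> norm_num
private lemma e23 : e 4 2 + e 4 3 = -va := by
  funext k; fin_cases k <;>
    simp [e, va, Fin.ext_iff, show ((2:Fin 4):ℕ) = 2 from rfl,
      show ((3:Fin 4):ℕ) = 3 from rfl] <;> norm_num

private lemma mem_six {i j : Fin 4} (hij : i < j) :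
    e 4 i + e 4 j = va ∨ e 4 i + e 4 j = vb ∨ e 4 i + e 4 j = vc ∨
    e 4 i + e 4 j = -va ∨ e 4 i + e 4 j = -vb ∨ e 4 i + e 4 j = -vc := by
  fin_cases i <;> fin_cases j <;> simp_all <;>
    first
      | (exact Or.inl e01)
      | (exact Or.inr (Or.inl e02))
      | (exact Or.inr (Or.inr (Or.inl e03)))
      | (exact Or.inr (Or.inr (Or.inr (Or.inl e23))))
      | (exact Or.inr (Or.inr (Or.inr (Or.inr (Or.inl e13)))))
      | (exact Or.inr (Or.inr (Or.inr (Or.inr (Or.inr e12)))))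

/-- Every subset of `{eᵢ + eⱼ : 1 ≤ i < j ≤ 4}` is saturated
(the weight system of `Λ²k^4` for `SL(4)`). -/
theorem lambda2_sl4_all_subsets_saturated (S : Finset (Fin 4 → ℚ))
    (hS : ∀ v ∈ S, ∃ i j : Fin 4, i < j ∧ v = e 4 i + e 4 j) :
    IsSaturatedSet S := by
  intro x hcex hqex
  obtain ⟨c, hc⟩ := hcex
  obtain ⟨q, hq0, hqx⟩ := hqex
  have hsub : S ⊆ ({va, vb, vc, -va, -vb, -vc} : Finset (Fin 4 → ℚ)) := by
    intro v hv
    obtain ⟨i, j, hij, rfl⟩ := hS v hv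
    rcases mem_six hij with h|h|h|h|h|h <;> simp [h]
  -- integer coefficients
  obtain ⟨Ca, hCa⟩ : ∃ z : ℤ, (if va ∈ S then ((c va : ℚ)) else 0) = (z : ℚ) :=
    ⟨if va ∈ S then c va else 0, by split_ifs <;> simp⟩
  obtain ⟨Cb, hCb⟩ : ∃ z : ℤ, (if vb ∈ S then ((c vb : ℚ)) else 0) = (z : ℚ) :=
    ⟨if vb ∈ S then c vb else 0, by split_ifs <;> simp⟩
  obtain ⟨Cc, hCc⟩ : ∃ z : ℤ, (if vc ∈ S then ((c vc : ℚ)) else 0) = (z : ℚ) :=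
    ⟨if vc ∈ S then c vc else 0, by split_ifs <;> simp⟩
  obtain ⟨Ca', hCa'⟩ : ∃ z : ℤ, (if -va ∈ S then ((c (-va) : ℚ)) else 0) = (z : ℚ) :=
    ⟨if -va ∈ S then c (-va) else 0, by split_ifs <;> simp⟩
  obtain ⟨Cb', hCb'⟩ : ∃ z : ℤ, (if -vb ∈ S then ((c (-vb) : ℚ)) else 0) = (z : ℚ) :=
    ⟨if -vb ∈ S then c (-vb) else 0, by split_ifs <;> simp⟩
  obtain ⟨Cc', hCc'⟩ : ∃ z : ℤ, (if -vc ∈ S then ((c (-vc) : ℚ)) else 0) = (z : ℚ) :=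
    ⟨if -vc ∈ S then c (-vc) else 0, by split_ifs <;> simp⟩
  have hcx : x = (Ca : ℚ) • va + (Cb : ℚ) • vb + (Cc : ℚ) • vc
      + (Ca' : ℚ) • (-va) + (Cb' : ℚ) • (-vb) + (Cc' : ℚ) • (-vc) := by
    rw [hc, hexp hsub, hCa, hCb, hCc, hCa', hCb', hCc']
  -- rational coefficients
  set Qa : ℚ := if va ∈ S then q va else 0 with hQadef
  set Qb : ℚ := if vb ∈ S then q vb else 0 with hQbdef
  set Qc : ℚ := if vc ∈ S then q vc else 0 with hQcdef
  set Qa' : ℚ := if -va ∈ S then q (-va) else 0 with hQa'def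
  set Qb' : ℚ := if -vb ∈ S then q (-vb) else 0 with hQb'def
  set Qc' : ℚ := if -vc ∈ S then q (-vc) else 0 with hQc'def
  have hqx' : x = Qa • va + Qb • vb + Qc • vc + Qa' • (-va) + Qb' • (-vb) + Qc' • (-vc) := by
    rw [hqx, hexp hsub]
  have hQa0 : 0 ≤ Qa := by rw [hQadef]; split_ifs with h; exacts [hq0 _ h, le_rfl]
  have hQb0 : 0 ≤ Qb := by rw [hQbdef]; split_ifs with h; exacts [hq0 _ h, le_rfl]
  have hQc0 : 0 ≤ Qc := by rw [hQcdef]; split_ifs with h; exacts [hq0 _ h, le_rfl]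
  have hQa'0 : 0 ≤ Qa' := by rw [hQa'def]; split_ifs with h; exacts [hq0 _ h, le_rfl]
  have hQb'0 : 0 ≤ Qb' := by rw [hQb'def]; split_ifs with h; exacts [hq0 _ h, le_rfl]
  have hQc'0 : 0 ≤ Qc' := by rw [hQc'def]; split_ifs with h; exacts [hq0 _ h, le_rfl]
  -- coordinates
  have heq := hcx.symm.trans hqx'
  have h0 := congrFun heq 0
  have h1 := congrFun heq 1
  have h2 := congrFun heq 2
  have h3 := congrFun heq 3
  simp only [Pi.add_apply, Pi.smul_apply, Pi.neg_apply, smul_eq_mul, va, vb, vc,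
    Matrix.cons_val_zero, Matrix.cons_val_one, Matrix.head_cons, Matrix.cons_val_two,
    Matrix.cons_val_three, Matrix.tail_cons, mul_neg] at h0 h1 h2 h3
  have hA : Qa - Qa' = ((Ca - Ca' : ℤ) : ℚ) := by push_cast; linarith
  have hB : Qb - Qb' = ((Cb - Cb' : ℤ) : ℚ) := by push_cast; linarith
  have hC : Qc - Qc' = ((Cc - Cc' : ℤ) : ℚ) := by push_cast; linarith
  -- the natural-number coefficients
  refine ⟨fun v => if v = va then (Ca - Ca').toNat else if v = vb then (Cb - Cb').toNat
    else if v = vc then (Cc - Cc').toNat else if v = -va then (Ca' - Ca).toNat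
    else if v = -vb then (Cb' - Cb).toNat else (Cc' - Cc).toNat, ?_⟩
  rw [hexp hsub]
  simp only [eq_self_iff_true, if_true, if_false, ite_true, ite_false,
    n12, n13, n14, n15, n16, n23, n24, n25, n26, n34, n35, n36, n45, n46, n56,
    Ne.symm n12, Ne.symm n13, Ne.symm n14, Ne.symm n15, Ne.symm n16, Ne.symm n23,
    Ne.symm n24, Ne.symm n25, Ne.symm n26, Ne.symm n34, Ne.symm n35, Ne.symm n36,
    Ne.symm n45, Ne.symm n46, Ne.symm n56]
  have pa : Qa - Qa' = (if va ∈ S then (((Ca - Ca').toNat : ℕ) : ℚ) else 0)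
      - (if -va ∈ S then (((Ca' - Ca).toNat : ℕ) : ℚ) else 0) := by
    rw [hA]
    by_cases hp : va ∈ S <;> by_cases hn : -va ∈ S <;>
      simp only [hp, hn, if_true, if_false, ite_true, ite_false]
    · exact_mod_cast show (Ca - Ca' : ℤ) = ((Ca - Ca').toNat : ℤ) - ((Ca' - Ca).toNat : ℤ) by omega
    · have h1 : Qa' = 0 := if_neg hn
      have h2 : (0:ℚ) ≤ ((Ca - Ca' : ℤ) : ℚ) := by rw [← hA, h1]; simpa using hQa0
      have h3 : (0:ℤ) ≤ Ca - Ca' := by exact_mod_cast h2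
      exact_mod_cast show (Ca - Ca' : ℤ) = ((Ca - Ca').toNat : ℤ) - 0 by omega
    · have h1 : Qa = 0 := if_neg hp
      have h2 : ((Ca - Ca' : ℤ) : ℚ) ≤ 0 := by rw [← hA, h1]; simpa using hQa'0
      have h3 : Ca - Ca' ≤ 0 := by exact_mod_cast h2
      exact_mod_cast show (Ca - Ca' : ℤ) = 0 - ((Ca' - Ca).toNat : ℤ) by omega
    · have h1 : Qa = 0 := if_neg hp
      have h2 : Qa' = 0 := if_neg hn
      have h4 : ((Ca - Ca' : ℤ) : ℚ) = 0 := by rw [← hA, h1, h2]; ring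
      push_cast at h4 ⊢
      linarith
  have pb : Qb - Qb' = (if vb ∈ S then (((Cb - Cb').toNat : ℕ) : ℚ) else 0)
      - (if -vb ∈ S then (((Cb' - Cb).toNat : ℕ) : ℚ) else 0) := by
    rw [hB]
    by_cases hp : vb ∈ S <;> by_cases hn : -vb ∈ S <;>
      simp only [hp, hn, if_true, if_false, ite_true, ite_false]
    · exact_mod_cast show (Cb - Cb' : ℤ) = ((Cb - Cb').toNat : ℤ) - ((Cb' - Cb).toNat : ℤ) by omega
    · have h1 : Qb' = 0 := if_neg hn
      have h2 : (0:ℚ) ≤ ((Cb - Cb' : ℤ) : ℚ) := by rw [← hB, h1]; simpa using hQb0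
      have h3 : (0:ℤ) ≤ Cb - Cb' := by exact_mod_cast h2
      exact_mod_cast show (Cb - Cb' : ℤ) = ((Cb - Cb').toNat : ℤ) - 0 by omega
    · have h1 : Qb = 0 := if_neg hp
      have h2 : ((Cb - Cb' : ℤ) : ℚ) ≤ 0 := by rw [← hB, h1]; simpa using hQb'0
      have h3 : Cb - Cb' ≤ 0 := by exact_mod_cast h2
      exact_mod_cast show (Cb - Cb' : ℤ) = 0 - ((Cb' - Cb).toNat : ℤ) by omega
    · have h1 : Qb = 0 := if_neg hp
      have h2 : Qb' = 0 := if_neg hn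
      have h4 : ((Cb - Cb' : ℤ) : ℚ) = 0 := by rw [← hB, h1, h2]; ring
      push_cast at h4 ⊢
      linarith
  have pc : Qc - Qc' = (if vc ∈ S then (((Cc - Cc').toNat : ℕ) : ℚ) else 0)
      - (if -vc ∈ S then (((Cc' - Cc).toNat : ℕ) : ℚ) else 0) := by
    rw [hC]
    by_cases hp : vc ∈ S <;> by_cases hn : -vc ∈ S <;>
      simp only [hp, hn, if_true, if_false, ite_true, ite_false]
    · exact_mod_cast show (Cc - Cc' : ℤ) = ((Cc - Cc').toNat : ℤ) - ((Cc' - Cc).toNat : ℤ) by omega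
    · have h1 : Qc' = 0 := if_neg hn
      have h2 : (0:ℚ) ≤ ((Cc - Cc' : ℤ) : ℚ) := by rw [← hC, h1]; simpa using hQc0
      have h3 : (0:ℤ) ≤ Cc - Cc' := by exact_mod_cast h2
      exact_mod_cast show (Cc - Cc' : ℤ) = ((Cc - Cc').toNat : ℤ) - 0 by omega
    · have h1 : Qc = 0 := if_neg hp
      have h2 : ((Cc - Cc' : ℤ) : ℚ) ≤ 0 := by rw [← hC, h1]; simpa using hQc'0
      have h3 : Cc - Cc' ≤ 0 := by exact_mod_cast h2
      exact_mod_cast show (Cc - Cc' : ℤ) = 0 - ((Cc' - Cc).toNat : ℤ) by omega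
    · have h1 : Qc = 0 := if_neg hp
      have h2 : Qc' = 0 := if_neg hn
      have h4 : ((Cc - Cc' : ℤ) : ℚ) = 0 := by rw [← hC, h1, h2]; ring
      push_cast at h4 ⊢
      linarith
  rw [hqx']
  funext k
  simp only [Pi.add_apply, Pi.smul_apply, Pi.neg_apply, smul_eq_mul, mul_neg]
  linear_combination va k * pa + vb k * pb + vc k * pc
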